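/- If α₁, α₂, …, α_r are roots of a crystallographic root system Φ and α₁ + α₂ + ⋯ + α_r = α is a root, then either α₁ = α, or there exists an index i with 2 ≤ i ≤ r such that α₁ + αᵢ is a root or zero. -/
import Mathlib


open scoped InnerProductSpace

section Aux

variable {V : Type*} [NormedAddCommGroup V] [InnerProductSpace ℝ V]

private lemma rs_inner_self_pos {x : V} (hx : x ≠ 0) : 0 < ⟪x, x⟫_ℝ := by
  rw [real_inner_self_eq_norm_sq]
  exact pow_pos (norm_pos_iff.2 hx) 2

private lemma rs_list_inner_sum (β : V) (l : List V) :
    ⟪β, l.sum⟫_ℝ = (l.map (fun x => ⟪β, x⟫_ℝ)).sum := by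
  induction l with
  | nil => simp
  | cons a t ih => simp [inner_add_right, ih]

private lemma rs_real_list_sum_nonpos : ∀ (l : List ℝ), (∀ x ∈ l, x ≤ 0) → l.sum ≤ 0 := by
  intro l h
  induction l with
  | nil => simp
  | cons a t ih =>
    simp only [List.sum_cons]
    have ha := h a (by simp)
    have ht := ih (fun x hx => h x (List.mem_cons_of_mem _ hx))
    linarith

private lemma rs_neg_mem (Φ : Finset V) (hzero : (0 : V) ∉ Φ)
    (hrefl : ∀ α ∈ Φ, ∀ β ∈ Φ, β - (2 * ⟪α, β⟫_ℝ / ⟪α, α⟫_ℝ) • α ∈ Φ)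
    {a : V} (ha : a ∈ Φ) : -a ∈ Φ := by
  have ha0 : a ≠ 0 := fun h => hzero (h ▸ ha)
  have haa : ⟪a, a⟫_ℝ ≠ 0 := ne_of_gt (rs_inner_self_pos ha0)
  have h := hrefl a ha a ha
  have hc : 2 * ⟪a, a⟫_ℝ / ⟪a, a⟫_ℝ = (2 : ℝ) := by
    field_simp
  rw [hc] at h
  have : a - (2 : ℝ) • a = -a := by module
  rwa [this] at h

/-- Key lemma: roots with positive inner product differ by a root (or are equal). -/
private lemma rs_key (Φ : Finset V) (hzero : (0 : V) ∉ Φ)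
    (hrefl : ∀ α ∈ Φ, ∀ β ∈ Φ, β - (2 * ⟪α, β⟫_ℝ / ⟪α, α⟫_ℝ) • α ∈ Φ)
    (hcrys : ∀ α ∈ Φ, ∀ β ∈ Φ, ∃ k : ℤ, 2 * ⟪α, β⟫_ℝ / ⟪α, α⟫_ℝ = (k : ℝ))
    (hred : ∀ α ∈ Φ, ∀ t : ℝ, t • α ∈ Φ → t = 1 ∨ t = -1)
    {a b : V} (ha : a ∈ Φ) (hb : b ∈ Φ) (hab : 0 < ⟪a, b⟫_ℝ) :
    a - b ∈ Φ ∨ a = b := by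
  have ha0 : a ≠ 0 := fun h => hzero (h ▸ ha)
  have hb0 : b ≠ 0 := fun h => hzero (h ▸ hb)
  have haa : 0 < ⟪a, a⟫_ℝ := rs_inner_self_pos ha0
  have hbb : 0 < ⟪b, b⟫_ℝ := rs_inner_self_pos hb0
  have hba : ⟪b, a⟫_ℝ = ⟪a, b⟫_ℝ := real_inner_comm a b
  obtain ⟨k, hk⟩ := hcrys b hb a ha
  obtain ⟨k', hk'⟩ := hcrys a ha b hb
  have hkpos : 0 < (k : ℝ) := by
    rw [← hk, hba]; positivity
  have hkpos' : 0 < (k' : ℝ) := by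
    rw [← hk']; positivity
  have hk1 : (1 : ℤ) ≤ k := by
    have : (0 : ℤ) < k := by exact_mod_cast hkpos
    omega
  have hk1' : (1 : ℤ) ≤ k' := by
    have : (0 : ℤ) < k' := by exact_mod_cast hkpos'
    omega
  by_cases h1 : k = 1
  · have h := hrefl b hb a ha
    rw [hk, h1] at h
    exact Or.inl (by simpa using h)
  by_cases h1' : k' = 1
  · have h := hrefl a ha b hb
    rw [hk', h1'] at h
    simp only [Int.cast_one, one_smul] at h
    have := rs_neg_mem Φ hzero hrefl h
    rw [neg_sub] at this
    exact Or.inl this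
  -- both coefficients are at least 2
  have hk2 : (2 : ℝ) ≤ (k : ℝ) := by exact_mod_cast (by omega : (2:ℤ) ≤ k)
  have hk2' : (2 : ℝ) ≤ (k' : ℝ) := by exact_mod_cast (by omega : (2:ℤ) ≤ k')
  have hcs : ⟪a, b⟫_ℝ * ⟪a, b⟫_ℝ ≤ ⟪a, a⟫_ℝ * ⟪b, b⟫_ℝ := real_inner_mul_inner_self_le a b
  have hkk : (k : ℝ) * (k' : ℝ) * (⟪a, a⟫_ℝ * ⟪b, b⟫_ℝ) = 4 * (⟪a, b⟫_ℝ * ⟪a, b⟫_ℝ) := by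
    rw [← hk, ← hk', hba]
    field_simp
    ring
  have h4 : (4 : ℝ) ≤ (k : ℝ) * (k' : ℝ) := by nlinarith
  have heq : ⟪a, b⟫_ℝ * ⟪a, b⟫_ℝ = ⟪a, a⟫_ℝ * ⟪b, b⟫_ℝ := by nlinarith [mul_pos haa hbb]
  -- Cauchy–Schwarz equality ⇒ b is a multiple of a
  have hnorm : ⟪a, b⟫_ℝ = ‖a‖ * ‖b‖ := by
    have h1 : (⟪a, b⟫_ℝ) ^ 2 = (‖a‖ * ‖b‖) ^ 2 := by
      rw [real_inner_self_eq_norm_mul_norm, real_inner_self_eq_norm_mul_norm] at heq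
      nlinarith
    have h2 : 0 ≤ ‖a‖ * ‖b‖ := by positivity
    nlinarith
  have hpar : ⟪a, b⟫_ℝ / (‖a‖ * ‖b‖) = 1 := by
    rw [hnorm]
    exact div_self (ne_of_gt (mul_pos (norm_pos_iff.2 ha0) (norm_pos_iff.2 hb0)))
  obtain ⟨-, t, ht0, rfl⟩ := (real_inner_div_norm_mul_norm_eq_one_iff a b).1 hpar
  rcases hred a ha t hb with rfl | rfl
  · right; rw [one_smul]
  · exfalso
    rw [real_inner_smul_right] at hab
    nlinarith

private lemma rs_key2 (Φ : Finset V) (hzero : (0 : V) ∉ Φ)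
    (hrefl : ∀ α ∈ Φ, ∀ β ∈ Φ, β - (2 * ⟪α, β⟫_ℝ / ⟪α, α⟫_ℝ) • α ∈ Φ)
    (hcrys : ∀ α ∈ Φ, ∀ β ∈ Φ, ∃ k : ℤ, 2 * ⟪α, β⟫_ℝ / ⟪α, α⟫_ℝ = (k : ℝ))
    (hred : ∀ α ∈ Φ, ∀ t : ℝ, t • α ∈ Φ → t = 1 ∨ t = -1)
    {a b : V} (ha : a ∈ Φ) (hb : b ∈ Φ) (hab : ⟪a, b⟫_ℝ < 0) :
    a + b ∈ Φ ∨ a + b = 0 := by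
  have hnb : -b ∈ Φ := rs_neg_mem Φ hzero hrefl hb
  have h : 0 < ⟪a, -b⟫_ℝ := by rw [inner_neg_right]; linarith
  rcases rs_key Φ hzero hrefl hcrys hred ha hnb h with h' | h'
  · left; rwa [sub_neg_eq_add] at h'
  · right; rw [h']; abel

/-- The main combinatorial lemma, in list form, by strong induction on the length. -/
private lemma rs_aux (Φ : Finset V) (hzero : (0 : V) ∉ Φ)
    (hrefl : ∀ α ∈ Φ, ∀ β ∈ Φ, β - (2 * ⟪α, β⟫_ℝ / ⟪α, α⟫_ℝ) • α ∈ Φ)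
    (hcrys : ∀ α ∈ Φ, ∀ β ∈ Φ, ∃ k : ℤ, 2 * ⟪α, β⟫_ℝ / ⟪α, α⟫_ℝ = (k : ℝ))
    (hred : ∀ α ∈ Φ, ∀ t : ℝ, t • α ∈ Φ → t = 1 ∨ t = -1) :
    ∀ (n : ℕ) (l : List V), l.length ≤ n → ∀ β ∈ Φ, (∀ x ∈ l, x ∈ Φ) →
      β + l.sum ∈ Φ →
      l.sum = 0 ∨ ∃ x ∈ l, β + x ∈ Φ ∨ β + x = 0 := by
  intro n
  induction n with
  | zero =>
    intro l hl β hβ _ _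
    left
    rw [List.length_eq_zero_iff.1 (Nat.le_zero.1 hl)]
    rfl
  | succ n ih =>
    intro l hl β hβ hmem hsum
    classical
    by_cases hs : l.sum = 0
    · exact Or.inl hs
    by_cases hex : ∃ x ∈ l, β + x ∈ Φ ∨ β + x = 0
    · exact Or.inr hex
    exfalso
    push_neg at hex
    have hpos : ∀ x ∈ l, 0 ≤ ⟪β, x⟫_ℝ := by
      intro x hx
      by_contra hneg
      push_neg at hneg
      rcases rs_key2 Φ hzero hrefl hcrys hred hβ (hmem x hx) hneg with h | h
      · exact (hex x hx).1 h
      · exact (hex x hx).2 h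
    have hβ0 : β ≠ 0 := fun h => hzero (h ▸ hβ)
    have hββ : 0 < ⟪β, β⟫_ℝ := rs_inner_self_pos hβ0
    have hβs : 0 ≤ ⟪β, l.sum⟫_ℝ := by
      rw [rs_list_inner_sum]
      apply List.sum_nonneg
      intro x hx
      obtain ⟨y, hy, rfl⟩ := List.mem_map.1 hx
      exact hpos y hy
    have h1 : 0 < ⟪β + l.sum, β⟫_ℝ := by
      rw [inner_add_left, real_inner_comm β l.sum]
      linarith
    rcases rs_key Φ hzero hrefl hcrys hred hsum hβ h1 with hαβ | hαβ
    · -- l.sum ∈ Φ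
      have hsΦ : l.sum ∈ Φ := by
        have : β + l.sum - β = l.sum := by abel
        rwa [this] at hαβ
      have hs0 : l.sum ≠ 0 := hs
      have hss : 0 < ⟪l.sum, l.sum⟫_ℝ := rs_inner_self_pos hs0
      have hey : ∃ y ∈ l, 0 < ⟪l.sum, y⟫_ℝ := by
        by_contra hc
        push_neg at hc
        have : ⟪l.sum, l.sum⟫_ℝ ≤ 0 := by
          rw [rs_list_inner_sum]
          apply rs_real_list_sum_nonpos
          intro x hx
          obtain ⟨y, hy, rfl⟩ := List.mem_map.1 hx
          exact hc y hy
        linarith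
      obtain ⟨y, hyl, hsy⟩ := hey
      have hyΦ := hmem y hyl
      have hperm : l.sum = y + (l.erase y).sum := by
        have h := (List.perm_cons_erase hyl).sum_eq
        simpa using h
      rcases rs_key Φ hzero hrefl hcrys hred hsΦ hyΦ hsy with hsyΦ | hsyeq
      · -- l.sum - y ∈ Φ
        have h2 : 0 < ⟪β + l.sum, y⟫_ℝ := by
          rw [inner_add_left]
          have := hpos y hyl
          linarith
        rcases rs_key Φ hzero hrefl hcrys hred hsum hyΦ h2 with h3 | h3
        · -- β + l.sum - y ∈ Φ : recurse on l.erase y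
          have hlen : (l.erase y).length ≤ n := by
            have := l.length_erase_of_mem hyl
            omega
          have hsum' : β + (l.erase y).sum ∈ Φ := by
            have heq : β + (l.erase y).sum = β + l.sum - y := by
              rw [hperm]; abel
            rwa [heq]
          rcases ih (l.erase y) hlen β hβ
              (fun x hx => hmem x (List.mem_of_mem_erase hx)) hsum' with h4 | ⟨x, hx, h5⟩
          · have : l.sum - y = (0 : V) := by rw [hperm, h4]; abel
            have hz : l.sum - y = (0 : V) := this
            exact hzero (hz ▸ hsyΦ)
          · have := hex x (List.mem_of_mem_erase hx)
            tauto
        · -- β + l.sum = y ⇒ β = -(l.sum - y)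
          have hβeq : β = -(l.sum - y) := by rw [← h3]; abel
          have hne : l.sum - y ≠ 0 := fun h => hzero (h ▸ hsyΦ)
          have hlt : ⟪β, l.sum - y⟫_ℝ < 0 := by
            rw [hβeq, inner_neg_left]
            have := rs_inner_self_pos hne
            linarith
          have hge : 0 ≤ ⟪β, l.sum - y⟫_ℝ := by
            have heq : l.sum - y = (l.erase y).sum := by rw [hperm]; abel
            rw [heq, rs_list_inner_sum]
            apply List.sum_nonneg
            intro x hx
            obtain ⟨z, hz, rfl⟩ := List.mem_map.1 hx
            exact hpos z (List.mem_of_mem_erase hz)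
          linarith
      · -- l.sum = y : then β + y ∈ Φ, contradiction
        have : β + y ∈ Φ := by rw [← hsyeq]; exact hsum
        exact (hex y hyl).1 this
    · -- β + l.sum = β ⇒ l.sum = 0
      exact hs (by have := hαβ; rwa [add_eq_left] at this)

end Aux

/-- Lemma 2.1(ii): if `α₁, …, α_r` are roots of a crystallographic root system `Φ` and
`α₁ + ⋯ + α_r = α` is a root, then either `α₁ = α` or there is an index `i ≥ 2` such
that `α₁ + αᵢ` is a root or zero. -/
theorem sum_of_roots_first_summand_alternative
    {V : Type*} [NormedAddCommGroup V] [InnerProductSpace ℝ V]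
    (Φ : Finset V)
    (hzero : (0 : V) ∉ Φ)
    (hspan : Submodule.span ℝ (Φ : Set V) = ⊤)
    (hrefl : ∀ α ∈ Φ, ∀ β ∈ Φ, β - (2 * ⟪α, β⟫_ℝ / ⟪α, α⟫_ℝ) • α ∈ Φ)
    (hcrys : ∀ α ∈ Φ, ∀ β ∈ Φ, ∃ k : ℤ, 2 * ⟪α, β⟫_ℝ / ⟪α, α⟫_ℝ = (k : ℝ))
    (hred : ∀ α ∈ Φ, ∀ t : ℝ, t • α ∈ Φ → t = 1 ∨ t = -1)
    (r : ℕ) (hr : 1 ≤ r) (α : Fin r → V)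
    (hmem : ∀ i, α i ∈ Φ)
    (hsummem : (∑ i, α i) ∈ Φ) :
    α ⟨0, hr⟩ = ∑ i, α i ∨
      ∃ i : Fin r, 1 ≤ (i : ℕ) ∧ (α ⟨0, hr⟩ + α i ∈ Φ ∨ α ⟨0, hr⟩ + α i = 0) := by
  obtain ⟨m, rfl⟩ : ∃ m, r = m + 1 := ⟨r - 1, (Nat.succ_pred_eq_of_pos hr).symm⟩
  have h0 : (⟨0, hr⟩ : Fin (m + 1)) = 0 := rfl
  rw [h0]
  set l : List V := List.ofFn (fun i : Fin m => α i.succ) with hl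
  have hlsum : l.sum = ∑ i : Fin m, α i.succ := by
    rw [hl, List.sum_ofFn]
  have hsplit : (∑ i, α i) = α 0 + l.sum := by
    rw [hlsum, Fin.sum_univ_succ]
  have hlmem : ∀ x ∈ l, x ∈ Φ := by
    intro x hx
    rw [hl, List.mem_ofFn] at hx
    obtain ⟨i, rfl⟩ := hx
    exact hmem _
  have hsum' : α 0 + l.sum ∈ Φ := by rw [← hsplit]; exact hsummem
  rcases rs_aux Φ hzero hrefl hcrys hred l.length l le_rfl (α 0) (hmem 0) hlmem hsum'
      with h | ⟨x, hx, hx'⟩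
  · left
    rw [hsplit, h, add_zero]
  · right
    rw [hl, List.mem_ofFn] at hx
    obtain ⟨i, rfl⟩ := hx
    exact ⟨i.succ, by simp [Fin.succ], hx'⟩
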